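/- For k ≥ 3 and n ≥ 1, the density Hales-Jewett number c_{n,k} (the maximum size of a subset of [k]^n containing no combinatorial line) equals the maximum size of a 1-monochromatic cylinder intersection with respect to Part_{n,k}, i.e., the maximum size of a cylinder intersection contained in the set of k-tuples of subsets of [n] forming a partition of [n]. -/

import Mathlib

def IsPartitionTuple (n k : ℕ) (S : Fin k → Finset (Fin n)) : Prop :=
  (∀ i j, i ≠ j → Disjoint (S i) (S j)) ∧ ∀ x : Fin n, ∃ i, x ∈ S i

def IsCylinder {k : ℕ} {X : Fin k → Type*} (i : Fin k) (C : Set (∀ j, X j)) : Prop :=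
  ∀ x y : ∀ j, X j, (∀ j, j ≠ i → x j = y j) → (x ∈ C ↔ y ∈ C)

def IsCylinderIntersection {k : ℕ} {X : Fin k → Type*} (C : Set (∀ j, X j)) : Prop :=
  ∃ Cs : Fin k → Set (∀ j, X j), (∀ i, IsCylinder i (Cs i)) ∧ C = ⋂ i, Cs i

def IsCombinatorialLine (n k : ℕ) (L : Set (Fin n → Fin k)) : Prop :=
  ∃ w : Fin n → Option (Fin k), (∃ x, w x = none) ∧
    L = Set.range fun j : Fin k => fun x : Fin n => (w x).getD j

/-- The density Hales-Jewett number `c_{n,k}`: the maximum size of a subset of `[k]^n`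
containing no combinatorial line. -/
noncomputable def densityHJ (n k : ℕ) : ℕ :=
  sSup {m | ∃ A : Set (Fin n → Fin k),
    (¬ ∃ L, IsCombinatorialLine n k L ∧ L ⊆ A) ∧ Nat.card A = m}

/-- The tuple of colour classes of a word: `toTuple w i = w⁻¹(i)`.  This is a bijection
between words in `[k]^n` and partition tuples. -/
def toTuple {n k : ℕ} (w : Fin n → Fin k) : Fin k → Finset (Fin n) :=
  fun i => Finset.univ.filter fun x => w x = i

lemma mem_toTuple {n k : ℕ} {w : Fin n → Fin k} {i : Fin k} {x : Fin n} :
    x ∈ toTuple w i ↔ w x = i := by simp [toTuple]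

lemma toTuple_partition {n k : ℕ} (w : Fin n → Fin k) :
    IsPartitionTuple n k (toTuple w) := by
  constructor
  · intro i j hij
    rw [Finset.disjoint_left]
    intro x hx hx'
    rw [mem_toTuple] at hx hx'
    exact hij (hx ▸ hx')
  · intro x
    exact ⟨w x, mem_toTuple.2 rfl⟩

lemma toTuple_injective {n k : ℕ} : Function.Injective (toTuple (n := n) (k := k)) := by
  intro w w' h
  funext x
  have : x ∈ toTuple w' (w x) := h ▸ mem_toTuple.2 rfl
  exact (mem_toTuple.1 this).symm

lemma partition_mem_range {n k : ℕ} {S : Fin k → Finset (Fin n)}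
    (h : IsPartitionTuple n k S) : S ∈ Set.range (toTuple (n := n) (k := k)) := by
  choose w hw using h.2
  refine ⟨w, funext fun i => Finset.ext fun x => ?_⟩
  rw [mem_toTuple]
  constructor
  · rintro rfl; exact hw x
  · intro hx
    by_contra hne
    exact Finset.disjoint_left.1 (h.1 _ _ hne) (hw x) hx

/-- If `C` is a cylinder intersection contained in the partition tuples, then the
corresponding set of words is combinatorial-line-free. -/
lemma linefree_of_cyl {n k : ℕ} {C : Set (Fin k → Finset (Fin n))}
    (hC : IsCylinderIntersection C) (hP : C ⊆ {S | IsPartitionTuple n k S}) :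
    ¬ ∃ L, IsCombinatorialLine n k L ∧ L ⊆ toTuple ⁻¹' C := by
  rintro ⟨L, ⟨u, ⟨x₀, hx₀⟩, rfl⟩, hLA⟩
  obtain ⟨Cs, hcyl, rfl⟩ := hC
  set S : Fin k → Finset (Fin n) :=
    fun i => Finset.univ.filter fun x => u x = some i with hSdef
  have hpt : ∀ j : Fin k, toTuple (fun x => (u x).getD j) ∈ ⋂ i, Cs i :=
    fun j => hLA ⟨j, rfl⟩
  have hS : S ∈ ⋂ i, Cs i := by
    rw [Set.mem_iInter]
    intro i
    have hagree : ∀ j, j ≠ i → S j = toTuple (fun x => (u x).getD i) j := by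
      intro j hj
      ext x
      rw [mem_toTuple]
      simp only [hSdef, Finset.mem_filter, Finset.mem_univ, true_and]
      cases hu : u x <;> simp [hu, Ne.symm hj]
    exact (hcyl i S _ hagree).2 (Set.mem_iInter.1 (hpt i) i)
  obtain ⟨i, hi⟩ := (hP hS).2 x₀
  simp only [hSdef, Finset.mem_filter, Finset.mem_univ, true_and, hx₀] at hi
  cases hi

/-- If `A` is a combinatorial-line-free set of words and `k ≥ 3`, then the image of `A`
under `toTuple` is a cylinder intersection contained in the partition tuples. -/
lemma cyl_of_linefree {n k : ℕ} (hk : 3 ≤ k) (A : Set (Fin n → Fin k))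
    (hA : ¬ ∃ L, IsCombinatorialLine n k L ∧ L ⊆ A) :
    ∃ C : Set (Fin k → Finset (Fin n)),
      IsCylinderIntersection C ∧ C ⊆ {S | IsPartitionTuple n k S} ∧ C = toTuple '' A := by
  set Cs : Fin k → Set (Fin k → Finset (Fin n)) :=
    fun i => {S | ∃ w ∈ A, ∀ j, j ≠ i → S j = toTuple w j} with hCsdef
  have hcyl : ∀ i, IsCylinder i (Cs i) := by
    intro i x y hxy
    constructor
    · rintro ⟨w, hw, h⟩
      exact ⟨w, hw, fun j hj => (hxy j hj) ▸ h j hj⟩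
    · rintro ⟨w, hw, h⟩
      exact ⟨w, hw, fun j hj => (hxy j hj) ▸ h j hj⟩
  have himg : (⋂ i, Cs i) = toTuple '' A := by
    apply Set.Subset.antisymm
    · intro S hS
      rw [Set.mem_iInter] at hS
      choose wi hwiA hwi using hS
      -- pairwise disjointness from k ≥ 3
      have hdisj : ∀ i j : Fin k, i ≠ j → Disjoint (S i) (S j) := by
        intro i j hij
        have : ((Finset.univ : Finset (Fin k)) \ {i, j}).Nonempty := by
          rw [← Finset.card_pos]
          have h1 : ({i, j} : Finset (Fin k)).card ≤ 2 := Finset.card_insert_le _ _ |>.trans (by simp)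
          have h2 := Finset.le_card_sdiff ({i, j} : Finset (Fin k)) Finset.univ
          have h3 : (Finset.univ : Finset (Fin k)).card = k := Finset.card_fin k
          omega
        obtain ⟨l, hl⟩ := this
        simp only [Finset.mem_sdiff, Finset.mem_univ, Finset.mem_insert, Finset.mem_singleton,
          true_and, not_or] at hl
        rw [hwi l i (fun h => hl.1 h.symm), hwi l j (fun h => hl.2 h.symm)]
        exact (toTuple_partition (wi l)).1 i j hij
      -- a point in S c forces every witness to take value c there
      have hval : ∀ (j : Fin k) (x : Fin n) (c : Fin k), x ∈ S c → wi j x = c := by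
        intro j x c hxc
        by_cases hc : c = j
        · subst hc
          by_contra hne
          have hx : x ∈ S (wi c x) := by
            rw [hwi c (wi c x) hne]
            exact mem_toTuple.2 rfl
          exact Finset.disjoint_left.1 (hdisj _ _ hne) hx hxc
        · have : x ∈ toTuple (wi j) c := (hwi j c hc) ▸ hxc
          exact mem_toTuple.1 this
      by_cases hcov : ∀ x : Fin n, ∃ i, x ∈ S i
      · -- S is a partition, and equals toTuple of any witness
        set i₀ : Fin k := ⟨0, by omega⟩
        refine ⟨wi i₀, hwiA i₀, ?_⟩
        funext i
        ext x
        rw [mem_toTuple]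
        constructor
        · intro hx
          obtain ⟨b, hb⟩ := hcov x
          have := hval i₀ x b hb
          rw [hx] at this
          exact this ▸ hb
        · exact hval i₀ x i
      · -- otherwise A contains a combinatorial line
        exfalso
        push_neg at hcov
        obtain ⟨x₀, hx₀⟩ := hcov
        set u : Fin n → Option (Fin k) :=
          fun x => if h : ∃ i, x ∈ S i then some h.choose else none with hudef
        apply hA
        refine ⟨_, ⟨u, ⟨x₀, dif_neg (by simpa using hx₀)⟩, rfl⟩, ?_⟩
        rintro _ ⟨j, rfl⟩
        have : (fun x => (u x).getD j) = wi j := by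
          funext x
          by_cases h : ∃ i, x ∈ S i
          · have hu : u x = some h.choose := dif_pos h
            rw [hu]
            exact (hval j x h.choose h.choose_spec).symm
          · have hu : u x = none := dif_neg h
            rw [hu]
            by_contra hne
            exact h ⟨wi j x, by rw [hwi j _ (Ne.symm hne)]; exact mem_toTuple.2 rfl⟩
        show (fun x => (u x).getD j) ∈ A
        rw [this]
        exact hwiA j
    · rintro _ ⟨w, hw, rfl⟩
      rw [Set.mem_iInter]
      intro i
      exact ⟨w, hw, fun j _ => rfl⟩
  refine ⟨⋂ i, Cs i, ⟨Cs, hcyl, rfl⟩, ?_, himg⟩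
  rw [himg]
  rintro _ ⟨w, _, rfl⟩
  exact toTuple_partition w

/-- For `k ≥ 3` and `n ≥ 1`, the density Hales-Jewett number `c_{n,k}` equals the
maximum size of a cylinder intersection contained in `Part_{n,k}⁻¹(1)`, i.e. in the set
of `k`-tuples of subsets of `[n]` forming a partition of `[n]`. -/
theorem densityHJ_eq_max_cylinder_intersection (n k : ℕ) (hk : 3 ≤ k) (hn : 1 ≤ n) :
    densityHJ n k =
      sSup {m | ∃ C : Set (Fin k → Finset (Fin n)),
        IsCylinderIntersection C ∧ C ⊆ {S | IsPartitionTuple n k S} ∧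
        Nat.card C = m} := by
  unfold densityHJ
  congr 1
  ext m
  constructor
  · rintro ⟨A, hA, rfl⟩
    obtain ⟨C, hcyl, hpart, hCA⟩ := cyl_of_linefree hk A hA
    refine ⟨C, hcyl, hpart, ?_⟩
    rw [hCA, Nat.card_image_of_injective toTuple_injective]
  · rintro ⟨C, hcyl, hpart, rfl⟩
    refine ⟨toTuple ⁻¹' C, linefree_of_cyl hcyl hpart, ?_⟩
    have hC : toTuple '' (toTuple ⁻¹' C) = C :=
      Set.image_preimage_eq_of_subset fun S hS => partition_mem_range (hpart hS)
    conv_rhs => rw [← hC]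
    exact (Nat.card_image_of_injective toTuple_injective _).symm
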